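/- Let G be a graph, C a longest cycle in G with a fixed orientation, and H a connected component of G − V(C). If u ∈ N_G(V(H)), then the successor u⁺ of u on C is not in N_G(V(H)), and the predecessor u⁻ of u on C is not in N_G(V(H)). -/

import Mathlib

open SimpleGraph

variable {V : Type*}

/-- The number of connected components after deleting the vertex set `S`. -/
noncomputable def omegaDel [Fintype V] (G : SimpleGraph V) (S : Finset V) : ℕ :=
  Nat.card ((G.induce ((S : Set V)ᶜ)).ConnectedComponent)

/-- `G` is `m`-connected. -/
def IsKConn [Fintype V] (G : SimpleGraph V) (m : ℕ) : Prop :=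
  m < Fintype.card V ∧ ∀ S : Finset V, S.card < m → (G.induce ((S : Set V)ᶜ)).Connected

/-- The independence number of `G`. -/
noncomputable def alphaNum [Fintype V] (G : SimpleGraph V) : ℕ :=
  sSup {n | ∃ s : Finset V, (∀ a ∈ s, ∀ b ∈ s, ¬ G.Adj a b) ∧ s.card = n}

/-- The minimum degree of `G`. -/
noncomputable def minDeg [Fintype V] (G : SimpleGraph V) : ℕ :=
  sInf {d | ∃ v : V, (G.neighborSet v).ncard = d}

/-- The graph `K₂ ∪ kK₁`. -/
def K2kK1 (k : ℕ) : SimpleGraph (Fin 2 ⊕ Fin k) :=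
  SimpleGraph.fromRel fun a b => a.isLeft ∧ b.isLeft

/-- `G` contains no induced copy of `H`. -/
def IndFree {W : Type*} (H : SimpleGraph W) (G : SimpleGraph V) : Prop :=
  IsEmpty (H ↪g G)

/-- `G` has a hamiltonian cycle. -/
def Ham [DecidableEq V] (G : SimpleGraph V) : Prop :=
  ∃ (a : V) (p : G.Walk a a), p.IsHamiltonianCycle

/-- `G` is hamiltonian-connected. -/
def HamConn [DecidableEq V] (G : SimpleGraph V) : Prop :=
  ∀ a b : V, a ≠ b → ∃ p : G.Walk a b, p.IsHamiltonian

/-- The Petersen graph. -/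
def petersen : SimpleGraph (ZMod 5 ⊕ ZMod 5) :=
  SimpleGraph.fromRel fun a b =>
    match a, b with
    | Sum.inl i, Sum.inl j => i = j + 1
    | Sum.inr i, Sum.inr j => i = j + 2
    | Sum.inl i, Sum.inr j => i = j
    | _, _ => False

open SimpleGraph.Walk

def inducedHom (G : SimpleGraph V) (s : Set V) : G.induce s →g G where
  toFun := Subtype.val
  map_rel' := fun h => h

def around (G : SimpleGraph V) {n : ℕ} (f : ZMod n → V)
    (hadj : ∀ i : ZMod n, G.Adj (f i) (f (i + 1))) (a : ZMod n) :
    (k : ℕ) → G.Walk (f a) (f (a + (k : ZMod n)))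
  | 0 => Walk.nil.copy rfl (congrArg f (by push_cast; ring))
  | (k+1) => ((around G f hadj a k).concat (hadj (a + (k : ZMod n)))).copy rfl
      (congrArg f (by push_cast; ring))

lemma around_length (G : SimpleGraph V) {n : ℕ} (f : ZMod n → V)
    (hadj : ∀ i : ZMod n, G.Adj (f i) (f (i + 1))) (a : ZMod n) (k : ℕ) :
    (around G f hadj a k).length = k := by
  induction k with
  | zero => simp [around]
  | succ k ih => simp [around, Walk.length_concat, ih]

lemma around_support (G : SimpleGraph V) {n : ℕ} (f : ZMod n → V)
    (hadj : ∀ i : ZMod n, G.Adj (f i) (f (i + 1))) (a : ZMod n) (k : ℕ) :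
    (around G f hadj a k).support = (List.range (k+1)).map (fun i : ℕ => f (a + (i : ZMod n))) := by
  induction k with
  | zero => simp [around, List.range_succ]
  | succ k ih =>
      rw [List.range_succ]
      simp [around, Walk.support_concat, ih, List.concat_eq_append, add_assoc]

lemma aux_succ {V : Type*} [Fintype V] (G : SimpleGraph V) (n : ℕ) (hn : 3 ≤ n)
    (f : ZMod n → V) (hinj : Function.Injective f)
    (hadj : ∀ i : ZMod n, G.Adj (f i) (f (i + 1)))
    (hlong : ∀ (v : V) (c : G.Walk v v), c.IsCycle → c.length ≤ n)
    (R : Set V) (hR : R = Set.range f)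
    (H : (G.induce Rᶜ).ConnectedComponent)
    (u : ZMod n) (hu : ∃ h ∈ Subtype.val '' H.supp, G.Adj (f u) h) :
    ¬ ∃ h ∈ Subtype.val '' H.supp, G.Adj (f (u + 1)) h := by
  subst hR
  haveI : NeZero n := ⟨by omega⟩
  classical
  rintro ⟨h₂, ⟨x₂, hx₂, rfl⟩, hadj₂⟩
  obtain ⟨h₁, ⟨x₁, hx₁, rfl⟩, hadj₁⟩ := hu
  have hx₁f : (x₁ : V) ∉ Set.range f := x₁.2
  have hx₂f : (x₂ : V) ∉ Set.range f := x₂.2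
  -- a path from x₁ to x₂ inside the component
  have hreach : (G.induce (Set.range f)ᶜ).Reachable x₁ x₂ := by
    rw [ConnectedComponent.mem_supp_iff] at hx₁ hx₂
    exact ConnectedComponent.exact (hx₁.trans hx₂.symm)
  obtain ⟨q⟩ := hreach
  have hvalinj : Function.Injective (inducedHom G (Set.range f)ᶜ) := Subtype.val_injective
  let P : G.Walk x₁.val x₂.val := (q.toPath : (G.induce (Set.range f)ᶜ).Walk x₁ x₂).map (inducedHom G (Set.range f)ᶜ)
  have hPpath : P.IsPath := Walk.map_isPath_of_injective hvalinj q.toPath.2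
  have hPsupp : ∀ v ∈ P.support, v ∉ Set.range f := by
    intro v hv
    change v ∈ (Walk.map (inducedHom G (Set.range f)ᶜ) (q.toPath : (G.induce (Set.range f)ᶜ).Walk x₁ x₂)).support at hv
    rw [Walk.support_map, List.mem_map] at hv
    obtain ⟨x, _, rfl⟩ := hv
    exact x.2
  -- the long arc of the cycle from f (u+1) to f u
  have hcast : ((n - 1 : ℕ) : ZMod n) = -1 := by
    rw [Nat.cast_sub (by omega : 1 ≤ n), ZMod.natCast_self, Nat.cast_one]; ring
  let w1 : G.Walk (f (u + 1)) (f u) :=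
    (around G f hadj (u + 1) (n - 1)).copy rfl (congrArg f (by rw [hcast]; ring))
  have hw1supp : w1.support = (List.range n).map (fun i : ℕ => f (u + 1 + (i : ZMod n))) := by
    unfold w1
    rw [Walk.support_copy, around_support]
    congr 2
    omega
  have hw1mem : ∀ v ∈ w1.support, v ∈ Set.range f := by
    intro v hv
    rw [hw1supp, List.mem_map] at hv
    obtain ⟨i, _, rfl⟩ := hv
    exact ⟨_, rfl⟩
  have hw1nd : w1.support.Nodup := by
    rw [hw1supp]
    refine List.Nodup.map_on ?_ List.nodup_range
    intro i hi j hj hij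
    rw [List.mem_range] at hi hj
    have h2 : (i : ZMod n) = (j : ZMod n) := by
      have := hinj hij
      exact add_left_cancel this
    have := congrArg ZMod.val h2
    rwa [ZMod.val_cast_of_lt hi, ZMod.val_cast_of_lt hj] at this
  have hw1len : w1.length = n - 1 := by
    unfold w1
    rw [Walk.length_copy, around_length]
  -- the long cycle
  let c : G.Walk (f u) (f u) := Walk.cons hadj₁ (P.append (Walk.cons hadj₂.symm w1))
  have hcyc : c.IsCycle := by
    rw [Walk.cons_isCycle_iff]
    constructor
    · rw [Walk.isPath_def, Walk.support_append]
      simp only [Walk.support_cons, List.tail_cons]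
      rw [List.nodup_append]
      refine ⟨hPpath.support_nodup, hw1nd, ?_⟩
      intro a ha b hb hab
      subst hab
      exact hPsupp a ha (hw1mem a hb)
    · rw [Walk.edges_append, List.mem_append]
      rintro (hin | hin)
      · exact hPsupp _ (Walk.fst_mem_support_of_mem_edges P hin) ⟨u, rfl⟩
      · rw [Walk.edges_cons, List.mem_cons] at hin
        rcases hin with heq | hin
        · rw [Sym2.eq_iff] at heq
          rcases heq with ⟨h1, h2⟩ | ⟨h1, h2⟩
          · exact hx₂f ⟨u, h1⟩
          · have huu : u + 0 = u + 1 := by rw [add_zero]; exact hinj h1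
            have h01 : (0 : ZMod n) = 1 := add_left_cancel huu
            haveI : Fact (1 < n) := ⟨by omega⟩
            exact one_ne_zero h01.symm
        · exact hx₁f (hw1mem _ (Walk.snd_mem_support_of_mem_edges w1 hin))
  have hclen : c.length = P.length + (w1.length + 1) + 1 := by
    unfold c
    simp [Walk.length_append, Walk.length_cons]
  have := hlong (f u) c hcyc
  omega

/-- Successors and predecessors on a longest cycle of neighbors of a component of `G - C`
are not neighbors of that component. -/
theorem stmt_6 {V : Type*} [Fintype V] (G : SimpleGraph V) (n : ℕ) (hn : 3 ≤ n)
    (f : ZMod n → V) (hinj : Function.Injective f)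
    (hadj : ∀ i : ZMod n, G.Adj (f i) (f (i + 1)))
    (hlong : ∀ (v : V) (c : G.Walk v v), c.IsCycle → c.length ≤ n)
    (H : (G.induce (Set.range f)ᶜ).ConnectedComponent)
    (u : ZMod n) (hu : ∃ h ∈ Subtype.val '' H.supp, G.Adj (f u) h) :
    (¬ ∃ h ∈ Subtype.val '' H.supp, G.Adj (f (u + 1)) h) ∧
    (¬ ∃ h ∈ Subtype.val '' H.supp, G.Adj (f (u - 1)) h) := by
  constructor
  · exact aux_succ G n hn f hinj hadj hlong _ rfl H u hu
  · set g : ZMod n → V := fun i => f (-i) with hg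
    have hginj : Function.Injective g := fun a b h => neg_injective (hinj h)
    have hgadj : ∀ i : ZMod n, G.Adj (g i) (g (i + 1)) := by
      intro i
      have h1 : g i = f (-i - 1 + 1) := congrArg f (by ring)
      have h2 : g (i + 1) = f (-i - 1) := congrArg f (by ring)
      rw [h1, h2]
      exact (hadj (-i - 1)).symm
    have hrange : Set.range f = Set.range g := by
      ext v
      constructor
      · rintro ⟨i, rfl⟩; exact ⟨-i, congrArg f (by ring)⟩
      · rintro ⟨i, rfl⟩; exact ⟨-i, rfl⟩
    have hu' : ∃ h ∈ Subtype.val '' H.supp, G.Adj (g (-u)) h := by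
      have : g (-u) = f u := congrArg f (by ring)
      rw [this]; exact hu
    have hres := aux_succ G n hn g hginj hgadj hlong (Set.range f) hrange H (-u) hu'
    have : g (-u + 1) = f (u - 1) := congrArg f (by ring)
    rwa [this] at hres
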